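/- The partial action of O(n,n|ℝ) on antisymmetric matrices is compatible with the group law: if g₁ = [[A₁,B₁],[C₁,D₁]] and g₂ = [[A₂,B₂],[C₂,D₂]] are in O(n,n|ℝ), θ is antisymmetric, C₂θ+D₂ is invertible, and C₁(g₂·θ)+D₁ is invertible, then writing g₁g₂ = [[A,B],[C,D]], the matrix Cθ+D is invertible and (g₁g₂)·θ = g₁·(g₂·θ). -/
import Mathlib


open Matrix

/-- Compatibility of the partial action `g·θ = (Aθ + B)(Cθ + D)⁻¹` of `O(n,n|ℝ)` on
antisymmetric matrices with the group law: if `g₂·θ` is defined and `g₁·(g₂·θ)` is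
defined, then `(g₁g₂)·θ` is defined and equals `g₁·(g₂·θ)`. -/
theorem stmt9 (n : ℕ) (A₁ B₁ C₁ D₁ A₂ B₂ C₂ D₂ θ : Matrix (Fin n) (Fin n) ℝ)
    (hg1a : A₁ᵀ * C₁ + C₁ᵀ * A₁ = 0) (hg1b : B₁ᵀ * D₁ + D₁ᵀ * B₁ = 0)
    (hg1c : A₁ᵀ * D₁ + C₁ᵀ * B₁ = 1)
    (hg2a : A₂ᵀ * C₂ + C₂ᵀ * A₂ = 0) (hg2b : B₂ᵀ * D₂ + D₂ᵀ * B₂ = 0)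
    (hg2c : A₂ᵀ * D₂ + C₂ᵀ * B₂ = 1)
    (hθ : θᵀ = -θ)
    (h2 : IsUnit (C₂ * θ + D₂))
    (h1 : IsUnit (C₁ * ((A₂ * θ + B₂) * (C₂ * θ + D₂)⁻¹) + D₁)) :
    IsUnit ((C₁ * A₂ + D₁ * C₂) * θ + (C₁ * B₂ + D₁ * D₂)) ∧
    ((A₁ * A₂ + B₁ * C₂) * θ + (A₁ * B₂ + B₁ * D₂)) *
        ((C₁ * A₂ + D₁ * C₂) * θ + (C₁ * B₂ + D₁ * D₂))⁻¹ =
      (A₁ * ((A₂ * θ + B₂) * (C₂ * θ + D₂)⁻¹) + B₁) *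
        (C₁ * ((A₂ * θ + B₂) * (C₂ * θ + D₂)⁻¹) + D₁)⁻¹ := by
  set M := C₂ * θ + D₂ with hMdef
  set N := A₂ * θ + B₂ with hNdef
  have hMd : IsUnit M.det := (Matrix.isUnit_iff_isUnit_det M).mp h2
  have hMi : M⁻¹ * M = 1 := Matrix.nonsing_inv_mul M hMd
  have hMi' : M * M⁻¹ = 1 := Matrix.mul_nonsing_inv M hMd
  have hden : (C₁ * A₂ + D₁ * C₂) * θ + (C₁ * B₂ + D₁ * D₂)
      = (C₁ * (N * M⁻¹) + D₁) * M := by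
    have : C₁ * (N * M⁻¹) * M = C₁ * N := by
      rw [mul_assoc, mul_assoc, hMi, mul_one]
    conv_rhs => rw [add_mul, this, hNdef, hMdef]
    noncomm_ring
  have hnum : (A₁ * A₂ + B₁ * C₂) * θ + (A₁ * B₂ + B₁ * D₂)
      = (A₁ * (N * M⁻¹) + B₁) * M := by
    have : A₁ * (N * M⁻¹) * M = A₁ * N := by
      rw [mul_assoc, mul_assoc, hMi, mul_one]
    conv_rhs => rw [add_mul, this, hNdef, hMdef]
    noncomm_ring
  refine ⟨by rw [hden]; exact h1.mul h2, ?_⟩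
  rw [hden, hnum, Matrix.mul_inv_rev, ← mul_assoc, mul_assoc (A₁ * (N * M⁻¹) + B₁),
    hMi', mul_one]
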